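/- Consider one agent at 0 in group G₁ of weight w_min > 0 and n − 1 agents at 1 in group G₂ of weight w_max ≥ w_min (n ≥ 2). Under the weighted total group cost objective for a single facility, the location y* = (n−1)·w_max/((n−1)·w_max + w_min) minimizes the maximum group effect, achieving value (n−1)·w_max·w_min/((n−1)·w_max + w_min), while the leftmost location 0 achieves (n−1)·w_max; hence the ratio is exactly 1 + (n−1)·w_max/w_min. -/

import Mathlib

theorem stmt13 (n : ℕ) (hn : 2 ≤ n) (wmin wmax : ℝ)
    (hmin : 0 < wmin) (hle : wmin ≤ wmax)
    (MGE : ℝ → ℝ)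
    (hMGE : ∀ y : ℝ, MGE y =
      max (wmin * |y - 0|) (wmax * (((n : ℝ) - 1) * |y - 1|))) :
    (∀ y : ℝ, MGE (((n : ℝ) - 1) * wmax / (((n : ℝ) - 1) * wmax + wmin)) ≤ MGE y) ∧
    MGE (((n : ℝ) - 1) * wmax / (((n : ℝ) - 1) * wmax + wmin))
        = ((n : ℝ) - 1) * wmax * wmin / (((n : ℝ) - 1) * wmax + wmin) ∧
    MGE 0 = ((n : ℝ) - 1) * wmax ∧
    MGE 0 = (1 + ((n : ℝ) - 1) * wmax / wmin)
        * (((n : ℝ) - 1) * wmax * wmin / (((n : ℝ) - 1) * wmax + wmin)) := by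
  have hn1 : (1:ℝ) ≤ (n:ℝ) - 1 := by
    have : (2:ℝ) ≤ (n:ℝ) := by exact_mod_cast hn
    linarith
  set a : ℝ := ((n:ℝ) - 1) * wmax with ha
  have hwmax : 0 < wmax := lt_of_lt_of_le hmin hle
  have hapos : 0 < a := mul_pos (by linarith) hwmax
  have hd : 0 < a + wmin := by linarith
  have hdne : a + wmin ≠ 0 := ne_of_gt hd
  set y0 : ℝ := a / (a + wmin) with hy0
  have hy0nn : 0 ≤ y0 := div_nonneg hapos.le hd.le
  have hy0le : y0 ≤ 1 := by
    rw [hy0, div_le_one hd]; linarith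
  have habs1 : |y0 - 0| = y0 := by rw [sub_zero, abs_of_nonneg hy0nn]
  have habs2 : |y0 - 1| = 1 - y0 := by
    rw [abs_of_nonpos (by linarith)]; ring
  have h1my0 : 1 - y0 = wmin / (a + wmin) := by
    field_simp [hy0]
    rw [hy0, sub_mul, div_mul_cancel₀ _ hdne]; ring
  have hval : MGE y0 = a * wmin / (a + wmin) := by
    rw [hMGE, habs1, habs2, h1my0]
    have e1 : wmin * y0 = a * wmin / (a + wmin) := by
      rw [hy0]; field_simp
    have e2 : wmax * (((n:ℝ) - 1) * (wmin / (a + wmin))) = a * wmin / (a + wmin) := by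
      rw [ha]; field_simp
    rw [e1, e2, max_self]
  have hzero : MGE 0 = a := by
    rw [hMGE]
    have : |(0:ℝ) - 1| = 1 := by norm_num
    rw [this, sub_zero, abs_zero, mul_zero, mul_one]
    rw [max_eq_right (by positivity : (0:ℝ) ≤ wmax * ((n:ℝ) - 1)), ha]
    ring
  refine ⟨?_, hval, hzero, ?_⟩
  · intro y
    rw [hval, hMGE y]
    by_cases hc : a * wmin / (a + wmin) ≤ wmin * |y - 0|
    · exact le_max_of_le_left hc
    · push_neg at hc
      apply le_max_of_le_right
      have hy : |y - 0| < y0 := by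
        have heq : a * wmin / (a + wmin) = wmin * y0 := by rw [hy0]; ring
        rw [heq] at hc
        exact (mul_lt_mul_iff_right₀ hmin).mp hc
      rw [sub_zero] at hy
      have h1 : 1 - y0 ≤ |y - 1| := by
        have h2 : y ≤ |y| := le_abs_self y
        have h3 : 1 - y ≤ |y - 1| := by
          rw [abs_sub_comm]; exact le_abs_self (1 - y)
        linarith
      calc a * wmin / (a + wmin) = a * (1 - y0) := by rw [h1my0, mul_div_assoc]
        _ ≤ a * |y - 1| := by nlinarith
        _ = wmax * (((n:ℝ) - 1) * |y - 1|) := by rw [ha]; ring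
  · rw [hzero]
    field_simp
    ring
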